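/- Let m, m' ≥ 2 and n = m·m'. The number of 2×n matrices A over ZMod 2 such that rank(A) = 2 and rank(A_i) ≤ 1 for every i ∈ {1,…,m} equals (3·2^{m'} − 2)^m − (3·2^{n} − 2). -/

import Mathlib

/-- The `2 × m'` submatrix `A_b` of a `2 × (m·m')` matrix `A`, formed by the columns
indexed by block `B_b` (the indices `i` with `(i : ℕ) / m' = b`). -/
def blockMat (m m' : ℕ) (A : Matrix (Fin 2) (Fin (m * m')) (ZMod 2)) (b : ℕ) :
    Matrix (Fin 2) {i : Fin (m * m') // (i : ℕ) / m' = b} (ZMod 2) :=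
  A.submatrix id Subtype.val

namespace Stmt8Aux

open Matrix Module Submodule Finset

attribute [local instance] Classical.propDecidable

/-- rows dependent -/
def Dep {ι : Type*} (A : Matrix (Fin 2) ι (ZMod 2)) : Prop :=
  A 0 = 0 ∨ A 1 = 0 ∨ A 0 = A 1

lemma li_of_not_dep {ι : Type*} {A : Matrix (Fin 2) ι (ZMod 2)} (hd : ¬ Dep A) :
    LinearIndependent (ZMod 2) A := by
  simp only [Dep, not_or] at hd
  obtain ⟨h0, h1, h01⟩ := hd
  apply linearIndependent_fin2.2
  refine ⟨h1, fun a => ?_⟩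
  have ha : a = 0 ∨ a = 1 := by
    fin_cases a
    · exact Or.inl rfl
    · exact Or.inr rfl
  rcases ha with rfl | rfl
  · simpa using Ne.symm h0
  · simpa using fun hh => h01 hh.symm

lemma rank_le_one_iff_dep {ι : Type*} [Fintype ι] (A : Matrix (Fin 2) ι (ZMod 2)) :
    A.rank ≤ 1 ↔ Dep A := by
  constructor
  · intro h
    by_contra hd
    have h2 := (li_of_not_dep hd).rank_matrix
    simp only [Fintype.card_fin] at h2
    omega
  · intro hd
    obtain ⟨v, hv⟩ : ∃ v : ι → ZMod 2,
        Set.range A ⊆ (span (ZMod 2) {v} : Submodule (ZMod 2) (ι → ZMod 2)) := by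
      have hr : Set.range A = {A 0, A 1} := by
        ext x
        constructor
        · rintro ⟨i, rfl⟩
          fin_cases i
          · exact Set.mem_insert _ _
          · exact Set.mem_insert_iff.2 (Or.inr rfl)
        · intro hx
          rcases Set.mem_insert_iff.1 hx with rfl | hx
          · exact ⟨0, rfl⟩
          · rcases Set.mem_singleton_iff.1 hx with rfl
            exact ⟨1, rfl⟩
      rcases hd with h | h | h
      · refine ⟨A 1, ?_⟩
        rw [hr]
        intro x hx
        rcases Set.mem_insert_iff.1 hx with rfl | hx
        · rw [h]; exact Submodule.zero_mem _
        · rcases Set.mem_singleton_iff.1 hx with rfl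
          exact Submodule.mem_span_singleton_self _
      · refine ⟨A 0, ?_⟩
        rw [hr]
        intro x hx
        rcases Set.mem_insert_iff.1 hx with rfl | hx
        · exact Submodule.mem_span_singleton_self _
        · rcases Set.mem_singleton_iff.1 hx with rfl
          rw [h]; exact Submodule.zero_mem _
      · refine ⟨A 0, ?_⟩
        rw [hr]
        intro x hx
        rcases Set.mem_insert_iff.1 hx with rfl | hx
        · exact Submodule.mem_span_singleton_self _
        · rcases Set.mem_singleton_iff.1 hx with rfl
          rw [← h]; exact Submodule.mem_span_singleton_self _
    calc A.rank = finrank (ZMod 2) (span (ZMod 2) (Set.range A)) := A.rank_eq_finrank_span_row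
      _ ≤ finrank (ZMod 2) (span (ZMod 2) ({v} : Set (ι → ZMod 2))) :=
          Submodule.finrank_mono (span_le.2 hv)
      _ ≤ 1 := by simpa using finrank_span_le_card ({v} : Set (ι → ZMod 2))

lemma rank_eq_two_iff_not_dep {ι : Type*} [Fintype ι] (A : Matrix (Fin 2) ι (ZMod 2)) :
    A.rank = 2 ↔ ¬ Dep A := by
  constructor
  · intro h hd
    have := (rank_le_one_iff_dep A).2 hd
    omega
  · intro hd
    have h2 := (li_of_not_dep hd).rank_matrix
    simpa using h2

/-- Splitting a matrix into its blocks. -/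
def E (m m' : ℕ) :
    Matrix (Fin 2) (Fin (m * m')) (ZMod 2) ≃ (Fin m → Matrix (Fin 2) (Fin m') (ZMod 2)) where
  toFun A := fun b r j => A r (finProdFinEquiv (b, j))
  invFun g := fun r i => g (finProdFinEquiv.symm i).1 r (finProdFinEquiv.symm i).2
  left_inv A := by
    funext r i
    exact congrArg (A r) (finProdFinEquiv.apply_symm_apply i)
  right_inv g := by
    funext b r j
    simp

lemma forall_block {m m' : ℕ} (hm' : 0 < m') (b : Fin m) (P : Fin (m * m') → Prop) :
    (∀ j : Fin m', P (finProdFinEquiv (b, j))) ↔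
      ∀ i : Fin (m * m'), (i : ℕ) / m' = (b : ℕ) → P i := by
  constructor
  · intro h i hi
    have hlt : (i : ℕ) % m' < m' := Nat.mod_lt _ hm'
    have : i = finProdFinEquiv (b, ⟨(i : ℕ) % m', hlt⟩) := by
      apply Fin.ext
      show (i : ℕ) = (i : ℕ) % m' + m' * (b : ℕ)
      rw [← hi, Nat.mod_add_div]
    rw [this]
    exact h _
  · intro h j
    refine h _ ?_
    show ((j : ℕ) + m' * (b : ℕ)) / m' = (b : ℕ)
    rw [Nat.add_mul_div_left _ _ hm', Nat.div_eq_of_lt j.2, Nat.zero_add]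

lemma dep_iff_forall {ι : Type*} (X : Matrix (Fin 2) ι (ZMod 2)) :
    Dep X ↔ (∀ i, X 0 i = 0) ∨ (∀ i, X 1 i = 0) ∨ (∀ i, X 0 i = X 1 i) := by
  simp [Dep, funext_iff]

lemma dep_block_iff {m m' : ℕ} (hm' : 0 < m') (A : Matrix (Fin 2) (Fin (m * m')) (ZMod 2))
    (b : Fin m) :
    Dep (blockMat m m' A (b : ℕ)) ↔ Dep (E m m' A b) := by
  rw [dep_iff_forall, dep_iff_forall]
  have h0 := forall_block hm' b (fun i => A 0 i = 0)
  have h1 := forall_block hm' b (fun i => A 1 i = 0)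
  have h2 := forall_block hm' b (fun i => A 0 i = A 1 i)
  simp only [blockMat, Matrix.submatrix_apply, id, Subtype.forall, E, Equiv.coe_fn_mk]
  exact or_congr h0.symm (or_congr h1.symm h2.symm)

lemma dep_block_of_dep {m m' : ℕ} {A : Matrix (Fin 2) (Fin (m * m')) (ZMod 2)}
    (h : Dep A) (b : Fin m) : Dep (E m m' A b) := by
  rcases h with h | h | h
  · exact Or.inl (by funext j; exact congrFun h _)
  · exact Or.inr (Or.inl (by funext j; exact congrFun h _))
  · exact Or.inr (Or.inr (by funext j; exact congrFun h _))

lemma card_pairs {V : Type*} [Fintype V] [DecidableEq V] [Zero V]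
    (h2 : 2 ≤ Fintype.card V) :
    Nat.card {p : V × V // p.1 = 0 ∨ p.2 = 0 ∨ p.1 = p.2} = 3 * Fintype.card V - 2 := by
  classical
  set c := Fintype.card V with hc
  let P : V × V → Prop := fun p => p.1 = 0 ∨ p.2 = 0 ∨ p.1 = p.2
  have hfiber : ∀ a : V, a ≠ 0 →
      Fintype.card {b : V // ¬(a = 0 ∨ b = 0 ∨ a = b)} = c - 2 := by
    intro a ha
    have hiff : ∀ b : V, (¬(a = 0 ∨ b = 0 ∨ a = b)) ↔ ¬(b = 0 ∨ b = a) := by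
      intro b
      push_neg
      constructor
      · rintro ⟨-, h1, h2⟩; exact ⟨h1, fun hh => h2 hh.symm⟩
      · rintro ⟨h1, h2⟩; exact ⟨ha, h1, fun hh => h2 hh.symm⟩
    rw [Fintype.card_congr (Equiv.subtypeEquivRight hiff), Fintype.card_subtype_compl]
    congr 1
    rw [Fintype.card_subtype]
    have : Finset.univ.filter (fun b : V => b = 0 ∨ b = a) = {0, a} := by
      ext b; simp [Finset.mem_insert]
    rw [this]
    rw [Finset.card_insert_of_notMem (by simpa using Ne.symm ha), Finset.card_singleton]
  have hfiber0 : Fintype.card {b : V // ¬((0:V) = 0 ∨ b = 0 ∨ (0:V) = b)} = 0 := by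
    refine Fintype.card_eq_zero_iff.2 ⟨fun x => x.2 (Or.inl rfl)⟩
  have hnot : Fintype.card {p : V × V // ¬ P p} = (c - 1) * (c - 2) := by
    rw [Fintype.card_congr
      (Equiv.subtypeProdEquivSigmaSubtype (fun a b : V => ¬(a = 0 ∨ b = 0 ∨ a = b)))]
    rw [Fintype.card_sigma]
    rw [← Finset.sum_erase Finset.univ
      (f := fun a : V => Fintype.card {b : V // ¬(a = 0 ∨ b = 0 ∨ a = b)}) (a := (0:V)) hfiber0]
    rw [Finset.sum_congr rfl (fun a ha => hfiber a (Finset.ne_of_mem_erase ha))]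
    rw [Finset.sum_const, Finset.card_erase_of_mem (Finset.mem_univ _), Finset.card_univ,
      smul_eq_mul]
  have hsum : Fintype.card {p : V × V // P p} + Fintype.card {p : V × V // ¬ P p} = c * c := by
    rw [← Fintype.card_sum, Fintype.card_congr (Equiv.sumCompl P), Fintype.card_prod]
  have h1le : (1 : ℕ) ≤ c := by omega
  have hz : (Fintype.card {p : V × V // P p} : ℤ) = 3 * (c:ℤ) - 2 := by
    have hs' : (Fintype.card {p : V × V // P p} : ℤ) + ((c:ℤ) - 1) * ((c:ℤ) - 2) = (c:ℤ) * c := by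
      have := hsum
      rw [hnot] at this
      zify [h1le, h2] at this
      linarith
    linear_combination hs'
  show Nat.card {p : V × V // P p} = 3 * c - 2
  rw [← Nat.card_eq_fintype_card] at hz
  omega

lemma card_dep {ι : Type*} [Fintype ι] [DecidableEq ι] (h1 : 1 ≤ Fintype.card ι) :
    Nat.card {A : Matrix (Fin 2) ι (ZMod 2) // Dep A} = 3 * 2 ^ (Fintype.card ι) - 2 := by
  have hV : Fintype.card (ι → ZMod 2) = 2 ^ Fintype.card ι := by
    rw [Fintype.card_fun, ZMod.card]
  have h2 : 2 ≤ Fintype.card (ι → ZMod 2) := by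
    rw [hV]
    calc (2:ℕ) = 2 ^ 1 := rfl
      _ ≤ 2 ^ Fintype.card ι := Nat.pow_le_pow_right (by norm_num) h1
  calc Nat.card {A : Matrix (Fin 2) ι (ZMod 2) // Dep A}
      = Nat.card {p : (ι → ZMod 2) × (ι → ZMod 2) // p.1 = 0 ∨ p.2 = 0 ∨ p.1 = p.2} :=
        Nat.card_congr ((finTwoArrowEquiv (ι → ZMod 2)).subtypeEquiv (fun A => by
          simp [Dep, finTwoArrowEquiv]))
    _ = 3 * Fintype.card (ι → ZMod 2) - 2 := card_pairs h2
    _ = 3 * 2 ^ Fintype.card ι - 2 := by rw [hV]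

end Stmt8Aux

open Stmt8Aux in
/-- the number of `2 × (m·m')` matrices over `ZMod 2` with `rank(A) = 2` and
`rank(A_i) ≤ 1` for every block `i` equals `(3·2^{m'} − 2)^m − (3·2^{m·m'} − 2)`. -/
theorem stmt_8 (m m' : ℕ) (hm : 2 ≤ m) (hm' : 2 ≤ m') :
    (Nat.card {A : Matrix (Fin 2) (Fin (m * m')) (ZMod 2) //
        A.rank = 2 ∧ ∀ b : ℕ, b < m → (blockMat m m' A b).rank ≤ 1} : ℤ) =
      (3 * 2 ^ m' - 2) ^ m - (3 * 2 ^ (m * m') - 2) := by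
  classical
  have hm'0 : 0 < m' := by omega
  have hiff : ∀ A : Matrix (Fin 2) (Fin (m * m')) (ZMod 2),
      (A.rank = 2 ∧ ∀ b : ℕ, b < m → (blockMat m m' A b).rank ≤ 1) ↔
      (¬ Dep A ∧ ∀ b : Fin m, Dep (E m m' A b)) := by
    intro A
    rw [rank_eq_two_iff_not_dep]
    refine and_congr Iff.rfl ?_
    constructor
    · intro h b
      rw [← dep_block_iff hm'0]
      exact (rank_le_one_iff_dep _).1 (h b b.2)
    · intro h b hb
      rw [rank_le_one_iff_dep]
      exact (dep_block_iff hm'0 A ⟨b, hb⟩).2 (h ⟨b, hb⟩)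
  rw [Nat.card_congr (Equiv.subtypeEquivRight hiff)]
  -- the split of the count
  have hsplit :
      Nat.card {A : Matrix (Fin 2) (Fin (m * m')) (ZMod 2) //
          ¬ Dep A ∧ ∀ b : Fin m, Dep (E m m' A b)}
        + Nat.card {A : Matrix (Fin 2) (Fin (m * m')) (ZMod 2) // Dep A}
      = Nat.card {A : Matrix (Fin 2) (Fin (m * m')) (ZMod 2) //
          ∀ b : Fin m, Dep (E m m' A b)} := by
    rw [Nat.card_eq_fintype_card, Nat.card_eq_fintype_card, Nat.card_eq_fintype_card]
    rw [Fintype.card_subtype, Fintype.card_subtype, Fintype.card_subtype]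
    have h := Finset.card_filter_add_card_filter_not
      (s := Finset.univ.filter
        (fun A : Matrix (Fin 2) (Fin (m * m')) (ZMod 2) => ∀ b : Fin m, Dep (E m m' A b)))
      (p := fun A => Dep A)
    rw [Finset.filter_filter, Finset.filter_filter] at h
    rw [Finset.filter_congr (fun A _ => show ((∀ b : Fin m, Dep (E m m' A b)) ∧ Dep A) ↔ Dep A by
      constructor
      · exact fun hh => hh.2
      · exact fun hh => ⟨dep_block_of_dep hh, hh⟩)] at h
    rw [Finset.filter_congr (fun A _ =>
      show ((∀ b : Fin m, Dep (E m m' A b)) ∧ ¬ Dep A) ↔ (¬ Dep A ∧ ∀ b : Fin m, Dep (E m m' A b))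
        from and_comm)] at h
    rw [add_comm]
    exact h
  have hQ : Nat.card {A : Matrix (Fin 2) (Fin (m * m')) (ZMod 2) //
      ∀ b : Fin m, Dep (E m m' A b)} = (3 * 2 ^ m' - 2) ^ m := by
    rw [Nat.card_congr ((E m m').subtypeEquiv
      (q := fun g => ∀ b : Fin m, Dep (g b)) (fun A => Iff.rfl))]
    rw [Nat.card_congr Equiv.subtypePiEquivPi]
    rw [Nat.card_pi]
    have hT : ∀ b : Fin m,
        Nat.card {B : Matrix (Fin 2) (Fin m') (ZMod 2) // Dep B} = 3 * 2 ^ m' - 2 := by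
      intro b
      have := card_dep (ι := Fin m') (by simp; omega)
      simpa using this
    rw [Finset.prod_congr rfl (fun b _ => hT b), Finset.prod_const, Finset.card_univ,
      Fintype.card_fin]
  have hD : Nat.card {A : Matrix (Fin 2) (Fin (m * m')) (ZMod 2) // Dep A}
      = 3 * 2 ^ (m * m') - 2 := by
    have := card_dep (ι := Fin (m * m')) (by simp; nlinarith)
    simpa using this
  rw [hQ, hD] at hsplit
  have e1 : (1:ℕ) ≤ 2 ^ m' := Nat.one_le_two_pow
  have e2 : (1:ℕ) ≤ 2 ^ (m * m') := Nat.one_le_two_pow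
  have h1 : (2:ℕ) ≤ 3 * 2 ^ m' := by omega
  have h2 : (2:ℕ) ≤ 3 * 2 ^ (m * m') := by omega
  have hz : (Nat.card {A : Matrix (Fin 2) (Fin (m * m')) (ZMod 2) //
      ¬ Dep A ∧ ∀ b : Fin m, Dep (E m m' A b)} : ℤ)
      + ((3 * 2 ^ (m * m') - 2 : ℕ) : ℤ) = ((( 3 * 2 ^ m' - 2 : ℕ)) : ℤ) ^ m := by
    exact_mod_cast congrArg (Nat.cast : ℕ → ℤ) hsplit
  push_cast [Nat.cast_sub h1, Nat.cast_sub h2] at hz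
  linarith
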